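/- Every Polish group with the Steinhaus property has automatic continuity: every group homomorphism from it to any separable topological group is continuous. -/

import Mathlib

open scoped Pointwise

/-- In a topological group, every neighborhood of 1 contains the n-th power of a
symmetric open neighborhood of 1. -/
lemma exists_sym_open_pow_subset {H : Type*} [Group H] [TopologicalSpace H]
    [IsTopologicalGroup H] (n : ℕ) {V : Set H} (hV : V ∈ nhds (1 : H)) :
    ∃ A : Set H, IsOpen A ∧ (1 : H) ∈ A ∧ A⁻¹ = A ∧ A ^ n ⊆ V := by
  induction n generalizing V with
  | zero =>
    refine ⟨Set.univ, isOpen_univ, trivial, by simp, ?_⟩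
    simp only [pow_zero]
    exact Set.singleton_subset_iff.2 (mem_of_mem_nhds hV)
  | succ n ih =>
    obtain ⟨B, hBopen, hB1, hBmul⟩ := exists_open_nhds_one_mul_subset hV
    obtain ⟨A, hAopen, hA1, hAsym, hApow⟩ := ih (hBopen.mem_nhds hB1)
    refine ⟨A ∩ B ∩ (A ∩ B)⁻¹, ((hAopen.inter hBopen).inter
      (hAopen.inter hBopen).inv), ⟨⟨hA1, hB1⟩, by simp [hA1, hB1]⟩, by
        ext x; simp only [Set.mem_inv, Set.mem_inter_iff, inv_inv]; tauto, ?_⟩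
    have hsub : A ∩ B ∩ (A ∩ B)⁻¹ ⊆ A ∩ B := Set.inter_subset_left
    calc (A ∩ B ∩ (A ∩ B)⁻¹) ^ (n + 1) ⊆ (A ∩ B) ^ (n + 1) :=
          Set.pow_subset_pow_left hsub
      _ = (A ∩ B) ^ n * (A ∩ B) := pow_succ _ _
      _ ⊆ A ^ n * B := Set.mul_subset_mul (Set.pow_subset_pow_left
          Set.inter_subset_left) Set.inter_subset_right
      _ ⊆ B * B := Set.mul_subset_mul_right hApow
      _ ⊆ V := by
          rintro x ⟨a, ha, b, hb, rfl⟩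
          exact hBmul (Set.mul_mem_mul ha hb)

lemma preimage_pow_subset {G H : Type*} [Group G] [Group H] (φ : G →* H)
    (B : Set H) (n : ℕ) : (φ ⁻¹' B) ^ n ⊆ φ ⁻¹' (B ^ n) := by
  induction n with
  | zero => simp [Set.singleton_subset_iff]
  | succ n ih =>
    rw [pow_succ, pow_succ]
    rintro x ⟨a, ha, b, hb, rfl⟩
    show φ (a * b) ∈ B ^ n * B
    rw [map_mul]
    exact Set.mul_mem_mul (ih ha) hb

/-- Rosendal–Solecki: a Steinhaus Polish group has automatic continuity. -/
theorem steinhaus_implies_automatic_continuity (G : Type*) [Group G] [TopologicalSpace G]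
    [IsTopologicalGroup G] [PolishSpace G]
    (hSteinhaus : ∃ k : ℕ, ∀ W : Set G, W⁻¹ = W →
      (∃ g : ℕ → G, (⋃ n, g n • W) = Set.univ) →
      ∃ U : Set G, IsOpen U ∧ (1 : G) ∈ U ∧ U ⊆ W ^ k) :
    ∀ (H : Type*) [Group H] [TopologicalSpace H] [IsTopologicalGroup H]
      [TopologicalSpace.SeparableSpace H] (φ : G →* H), Continuous φ := by
  intro H _ _ _ _ φ
  obtain ⟨k, hk⟩ := hSteinhaus
  apply continuous_of_continuousAt_one φ
  rw [ContinuousAt, map_one]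
  intro V hV
  rw [Filter.mem_map]
  -- choose a symmetric open A around 1 in H with A ^ (2k) ⊆ V
  obtain ⟨A, hAopen, hA1, hAsym, hApow⟩ := exists_sym_open_pow_subset (2 * k) hV
  set W : Set G := φ ⁻¹' (A ^ 2) with hW
  -- W is symmetric
  have hA2sym : (A ^ 2)⁻¹ = A ^ 2 := by rw [← inv_pow, hAsym]
  have hWsym : W⁻¹ = W := by
    ext x
    simp only [Set.mem_inv, hW, Set.mem_preimage, map_inv]
    constructor
    · intro h
      have : (φ x)⁻¹⁻¹ ∈ (A ^ 2)⁻¹ := Set.inv_mem_inv.2 h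
      rwa [inv_inv, hA2sym] at this
    · intro h
      have : (φ x)⁻¹ ∈ (A ^ 2)⁻¹ := Set.inv_mem_inv.2 h
      rwa [hA2sym] at this
  -- W is countably syndetic
  obtain ⟨D, hDcount, hDdense⟩ := TopologicalSpace.exists_countable_dense H
  have hDne : D.Nonempty := hDdense.nonempty.mono (by simp) |>.imp (fun _ h => h)
  obtain ⟨d, hd⟩ := (Set.countable_iff_exists_surjective hDne).1 hDcount
  classical
  -- for each n, pick gₙ in φ ⁻¹' ((d n : H) • A) if nonempty
  let g : ℕ → G := fun n =>
    if h : (φ ⁻¹' ((d n : H) • A)).Nonempty then h.choose else 1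
  have hcover : (⋃ n, g n • W) = Set.univ := by
    rw [Set.eq_univ_iff_forall]
    intro x
    -- find n with φ x ∈ d n • A
    have hopen : IsOpen (φ x • A⁻¹) := hAopen.inv.smul _
    have hmem : φ x ∈ φ x • A⁻¹ := by
      refine ⟨1⁻¹, by simpa using hA1, by simp⟩
    obtain ⟨y, hyD, hyA⟩ := hDdense.exists_mem_open hopen ⟨_, hmem⟩
    obtain ⟨n, hn⟩ := hd ⟨y, hyD⟩
    have hny : (d n : H) = y := congrArg Subtype.val hn
    subst hny
    have hxdn : φ x ∈ (d n : H) • A := by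
      obtain ⟨a, ha, hya⟩ := hyA
      have hya' : φ x * a = (d n : H) := hya
      refine ⟨a⁻¹, Set.mem_inv.1 ha, ?_⟩
      show (d n : H) * a⁻¹ = φ x
      rw [← hya', mul_assoc, mul_inv_cancel, mul_one]
    have hne : (φ ⁻¹' ((d n : H) • A)).Nonempty := ⟨x, hxdn⟩
    refine Set.mem_iUnion.2 ⟨n, ?_⟩
    have hgn : φ (g n) ∈ (d n : H) • A := by
      simp only [g, dif_pos hne]
      exact hne.choose_spec
    refine ⟨(g n)⁻¹ * x, ?_, by simp⟩
    -- need φ ((g n)⁻¹ * x) ∈ A ^ 2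
    show φ ((g n)⁻¹ * x) ∈ A ^ 2
    obtain ⟨a, haA, hga⟩ := hgn
    obtain ⟨b, hbA, hxb⟩ := hxdn
    have hga' : (d n : H) * a = φ (g n) := hga
    have hxb' : (d n : H) * b = φ x := hxb
    rw [map_mul, map_inv]
    have : (φ (g n))⁻¹ * φ x = a⁻¹ * b := by
      rw [← hga', ← hxb']; group
    rw [this, sq]
    have haA' : a⁻¹ ∈ A := by rw [← hAsym]; exact Set.inv_mem_inv.2 haA
    exact Set.mul_mem_mul haA' hbA
  obtain ⟨U, hUopen, hU1, hUsub⟩ := hk W hWsym ⟨g, hcover⟩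
  have hsub : U ⊆ φ ⁻¹' V := by
    intro x hx
    have := (preimage_pow_subset φ (A ^ 2) k) (hUsub hx)
    rw [Set.mem_preimage, ← pow_mul] at this
    exact hApow this
  exact Filter.mem_of_superset (hUopen.mem_nhds hU1) hsub
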